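/- Let G be a finite simple graph with clique partition π = {W₁,…,W_r}, let n₁,…,n_r be positive integers, and let H = G^π[n₁,…,n_r] be the multi-clique-whiskered graph. Then there is a bijection between the minimal vertex covers of H and the minimal vertex covers of G^π, given by replacing the set {w_{i,1},…,w_{i,nᵢ}} by the single vertex wᵢ: a set C ⊆ V(H) is a minimal vertex cover of H if and only if for every i either all or none of w_{i,1},…,w_{i,nᵢ} lie in C, and the corresponding set in V(G^π) is a minimal vertex cover of G^π. -/
import Mathlib

def cliqueWhisker {V ι : Type*} (G : SimpleGraph V) (p : V → ι) :
    SimpleGraph (V ⊕ ι) :=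
  SimpleGraph.fromRel (fun a b =>
    match a, b with
    | Sum.inl u, Sum.inl v => G.Adj u v
    | Sum.inl u, Sum.inr i => p u = i
    | _, _ => False)

def whiskerGraph {V : Type*} (G : SimpleGraph V) : SimpleGraph (V ⊕ V) :=
  SimpleGraph.fromRel (fun a b =>
    match a, b with
    | Sum.inl u, Sum.inl v => G.Adj u v
    | Sum.inl u, Sum.inr w => u = w
    | _, _ => False)

def IsVertexCover {V : Type*} (G : SimpleGraph V) (C : Set V) : Prop :=
  ∀ ⦃u v : V⦄, G.Adj u v → u ∈ C ∨ v ∈ C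

def IsMinVertexCover {V : Type*} (G : SimpleGraph V) (C : Set V) : Prop :=
  IsVertexCover G C ∧ ∀ D ⊆ C, IsVertexCover G D → D = C

def IsIndep {V : Type*} (G : SimpleGraph V) (A : Set V) : Prop :=
  ∀ u ∈ A, ∀ v ∈ A, ¬ G.Adj u v

def multiCliqueWhisker {V ι : Type*} (G : SimpleGraph V) (p : V → ι) (n : ι → ℕ) :
    SimpleGraph (V ⊕ Σ i : ι, Fin (n i)) :=
  SimpleGraph.fromRel (fun a b =>
    match a, b with
    | Sum.inl u, Sum.inl v => G.Adj u v
    | Sum.inl u, Sum.inr ⟨i, _⟩ => p u = i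
    | _, _ => False)

/-- A vertex cover is minimal iff every vertex in it has a "private" edge. -/
lemma minCover_iff' {V : Type*} (G : SimpleGraph V) (C : Set V) :
    IsMinVertexCover G C ↔
      IsVertexCover G C ∧ ∀ x ∈ C, ∃ y, G.Adj x y ∧ y ∉ C := by
  constructor
  · rintro ⟨hc, hmin⟩
    refine ⟨hc, fun x hx => ?_⟩
    by_contra h
    push_neg at h
    have hcov : IsVertexCover G (C \ {x}) := by
      intro u v huv
      rcases hc huv with hu | hv
      · by_cases hux : u = x
        · subst hux
          exact Or.inr ⟨h v huv, fun hvx => G.irrefl (hvx ▸ huv)⟩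
        · exact Or.inl ⟨hu, hux⟩
      · by_cases hvx : v = x
        · subst hvx
          exact Or.inl ⟨h u huv.symm, fun hux => G.irrefl (hux ▸ huv)⟩
        · exact Or.inr ⟨hv, hvx⟩
    have heq := hmin _ Set.diff_subset hcov
    rw [← heq] at hx
    exact hx.2 rfl
  · rintro ⟨hc, hpriv⟩
    refine ⟨hc, fun D hD hDc => ?_⟩
    refine Set.Subset.antisymm hD (fun x hx => ?_)
    by_contra hxD
    obtain ⟨y, hxy, hyC⟩ := hpriv x hx
    rcases hDc hxy with h | h
    · exact hxD h
    · exact hyC (hD h)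

section adj
variable {V ι : Type*} (G : SimpleGraph V) (p : V → ι) (n : ι → ℕ)

lemma cw_ll {u v : V} : (cliqueWhisker G p).Adj (Sum.inl u) (Sum.inl v) ↔ G.Adj u v := by
  simp [cliqueWhisker, SimpleGraph.fromRel_adj, G.adj_comm]
  intro h; exact G.ne_of_adj h

lemma cw_lr {u : V} {i : ι} : (cliqueWhisker G p).Adj (Sum.inl u) (Sum.inr i) ↔ p u = i := by
  simp [cliqueWhisker, SimpleGraph.fromRel_adj]

lemma cw_rl {u : V} {i : ι} : (cliqueWhisker G p).Adj (Sum.inr i) (Sum.inl u) ↔ p u = i := by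
  simp [cliqueWhisker, SimpleGraph.fromRel_adj]

lemma cw_rr {i j : ι} : ¬ (cliqueWhisker G p).Adj (Sum.inr i) (Sum.inr j) := by
  simp [cliqueWhisker, SimpleGraph.fromRel_adj]

lemma mcw_ll {u v : V} : (multiCliqueWhisker G p n).Adj (Sum.inl u) (Sum.inl v) ↔ G.Adj u v := by
  simp [multiCliqueWhisker, SimpleGraph.fromRel_adj, G.adj_comm]
  intro h; exact G.ne_of_adj h

lemma mcw_lr {u : V} {i : ι} {k : Fin (n i)} :
    (multiCliqueWhisker G p n).Adj (Sum.inl u) (Sum.inr ⟨i, k⟩) ↔ p u = i := by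
  simp [multiCliqueWhisker, SimpleGraph.fromRel_adj]

lemma mcw_rl {u : V} {i : ι} {k : Fin (n i)} :
    (multiCliqueWhisker G p n).Adj (Sum.inr ⟨i, k⟩) (Sum.inl u) ↔ p u = i := by
  simp [multiCliqueWhisker, SimpleGraph.fromRel_adj]

lemma mcw_rr {x y : Σ i : ι, Fin (n i)} :
    ¬ (multiCliqueWhisker G p n).Adj (Sum.inr x) (Sum.inr y) := by
  obtain ⟨i, k⟩ := x; obtain ⟨j, l⟩ := y
  simp [multiCliqueWhisker, SimpleGraph.fromRel_adj]

end adj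

theorem stmt16 {V : Type*} [Fintype V] {r : ℕ} (G : SimpleGraph V) (p : V → Fin r)
    (n : Fin r → ℕ) (hn : ∀ i, 0 < n i)
    (hclique : ∀ u v : V, p u = p v → u ≠ v → G.Adj u v)
    (hsurj : Function.Surjective p)
    (C : Set (V ⊕ Σ i : Fin r, Fin (n i))) :
    IsMinVertexCover (multiCliqueWhisker G p n) C ↔
      ((∀ i : Fin r, (∀ k, Sum.inr ⟨i, k⟩ ∈ C) ∨ (∀ k, Sum.inr ⟨i, k⟩ ∉ C)) ∧
        IsMinVertexCover (cliqueWhisker G p)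
          ((Sum.inl '' {v : V | Sum.inl v ∈ C}) ∪
            (Sum.inr '' {i : Fin r | ∃ k, Sum.inr ⟨i, k⟩ ∈ C}))) := by
  set C' : Set (V ⊕ Fin r) :=
    (Sum.inl '' {v : V | Sum.inl v ∈ C}) ∪
      (Sum.inr '' {i : Fin r | ∃ k, Sum.inr ⟨i, k⟩ ∈ C}) with hC'
  have memL : ∀ v : V, Sum.inl v ∈ C' ↔ Sum.inl v ∈ C := by
    intro v; simp [hC']
  have memR : ∀ i : Fin r, Sum.inr i ∈ C' ↔ ∃ k, Sum.inr ⟨i, k⟩ ∈ C := by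
    intro i; simp [hC']
  rw [minCover_iff', minCover_iff']
  constructor
  · rintro ⟨hc, hp⟩
    -- all-or-none property
    have hAON : ∀ i : Fin r, (∀ k, Sum.inr ⟨i, k⟩ ∈ C) ∨ (∀ k, Sum.inr ⟨i, k⟩ ∉ C) := by
      intro i
      by_cases h : ∃ k, Sum.inr ⟨i, k⟩ ∈ C
      · left
        obtain ⟨k, hk⟩ := h
        obtain ⟨y, hadj, hy⟩ := hp _ hk
        match y with
        | Sum.inl u =>
          have hpu : p u = i := (mcw_rl G p n).mp hadj
          intro k'
          have : (multiCliqueWhisker G p n).Adj (Sum.inl u) (Sum.inr ⟨i, k'⟩) :=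
            (mcw_lr G p n).mpr hpu
          rcases hc this with h1 | h2
          · exact absurd h1 hy
          · exact h2
        | Sum.inr x => exact absurd hadj (mcw_rr G p n)
      · right; push_neg at h; exact h
    refine ⟨hAON, ?_, ?_⟩
    · -- C' is a vertex cover of cliqueWhisker
      intro a b hab
      match a, b with
      | Sum.inl u, Sum.inl v =>
        rcases hc ((mcw_ll G p n).mpr ((cw_ll G p).mp hab)) with h | h
        · exact Or.inl ((memL u).mpr h)
        · exact Or.inr ((memL v).mpr h)
      | Sum.inl u, Sum.inr i =>
        have hpu : p u = i := (cw_lr G p).mp hab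
        have : (multiCliqueWhisker G p n).Adj (Sum.inl u) (Sum.inr ⟨i, ⟨0, hn i⟩⟩) :=
          (mcw_lr G p n).mpr hpu
        rcases hc this with h | h
        · exact Or.inl ((memL u).mpr h)
        · exact Or.inr ((memR i).mpr ⟨_, h⟩)
      | Sum.inr i, Sum.inl u =>
        have hpu : p u = i := (cw_rl G p).mp hab
        have : (multiCliqueWhisker G p n).Adj (Sum.inl u) (Sum.inr ⟨i, ⟨0, hn i⟩⟩) :=
          (mcw_lr G p n).mpr hpu
        rcases hc this with h | h
        · exact Or.inr ((memL u).mpr h)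
        · exact Or.inl ((memR i).mpr ⟨_, h⟩)
      | Sum.inr i, Sum.inr j => exact absurd hab (cw_rr G p)
    · -- private edges for C'
      intro x hx
      match x with
      | Sum.inl v =>
        obtain ⟨y, hadj, hy⟩ := hp _ ((memL v).mp hx)
        match y with
        | Sum.inl u =>
          exact ⟨Sum.inl u, (cw_ll G p).mpr ((mcw_ll G p n).mp hadj),
            fun h => hy ((memL u).mp h)⟩
        | Sum.inr ⟨i, k⟩ =>
          have hpv : p v = i := (mcw_lr G p n).mp hadj
          refine ⟨Sum.inr i, (cw_lr G p).mpr hpv, fun h => ?_⟩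
          obtain ⟨k', hk'⟩ := (memR i).mp h
          rcases hAON i with hall | hnone
          · exact hy (hall k)
          · exact hnone k' hk'
      | Sum.inr i =>
        obtain ⟨k, hk⟩ := (memR i).mp hx
        obtain ⟨y, hadj, hy⟩ := hp _ hk
        match y with
        | Sum.inl u =>
          have hpu : p u = i := (mcw_rl G p n).mp hadj
          exact ⟨Sum.inl u, (cw_rl G p).mpr hpu, fun h => hy ((memL u).mp h)⟩
        | Sum.inr _ => exact absurd hadj (mcw_rr G p n)
  · rintro ⟨hAON, hc', hp'⟩
    constructor
    · -- C is a vertex cover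
      intro a b hab
      match a, b with
      | Sum.inl u, Sum.inl v =>
        rcases hc' ((cw_ll G p).mpr ((mcw_ll G p n).mp hab)) with h | h
        · exact Or.inl ((memL u).mp h)
        · exact Or.inr ((memL v).mp h)
      | Sum.inl u, Sum.inr ⟨i, k⟩ =>
        have hpu : p u = i := (mcw_lr G p n).mp hab
        rcases hc' ((cw_lr G p).mpr hpu) with h | h
        · exact Or.inl ((memL u).mp h)
        · obtain ⟨k', hk'⟩ := (memR i).mp h
          rcases hAON i with hall | hnone
          · exact Or.inr (hall k)
          · exact absurd hk' (hnone k')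
      | Sum.inr ⟨i, k⟩, Sum.inl u =>
        have hpu : p u = i := (mcw_rl G p n).mp hab
        rcases hc' ((cw_lr G p).mpr hpu) with h | h
        · exact Or.inr ((memL u).mp h)
        · obtain ⟨k', hk'⟩ := (memR i).mp h
          rcases hAON i with hall | hnone
          · exact Or.inl (hall k)
          · exact absurd hk' (hnone k')
      | Sum.inr x, Sum.inr y => exact absurd hab (mcw_rr G p n)
    · -- private edges for C
      intro x hx
      match x with
      | Sum.inl v =>
        obtain ⟨y, hadj, hy⟩ := hp' _ ((memL v).mpr hx)
        match y with
        | Sum.inl u =>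
          exact ⟨Sum.inl u, (mcw_ll G p n).mpr ((cw_ll G p).mp hadj),
            fun h => hy ((memL u).mpr h)⟩
        | Sum.inr i =>
          have hpv : p v = i := (cw_lr G p).mp hadj
          refine ⟨Sum.inr ⟨i, ⟨0, hn i⟩⟩, (mcw_lr G p n).mpr hpv, fun h => ?_⟩
          exact hy ((memR i).mpr ⟨_, h⟩)
      | Sum.inr ⟨i, k⟩ =>
        have : Sum.inr i ∈ C' := (memR i).mpr ⟨k, hx⟩
        obtain ⟨y, hadj, hy⟩ := hp' _ this
        match y with
        | Sum.inl u =>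
          have hpu : p u = i := (cw_rl G p).mp hadj
          exact ⟨Sum.inl u, (mcw_rl G p n).mpr hpu, fun h => hy ((memL u).mpr h)⟩
        | Sum.inr _ => exact absurd hadj (cw_rr G p)
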